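/- arXiv:1301.2021 — 7 statements merged into one kernel-verified Lean document; each statement's English description precedes it below -/
import Mathlib

section
/- Under the same setup, the variance σ² of X satisfies n/2 ≤ σ² ≤ n². -/
open Polynomial

lemma prod_coeffs {ι : Type*} [DecidableEq ι] (s : Finset ι) (a : ι → ℝ) :
    (∏ i ∈ s, (1 + X + C (a i) * X ^ 2)).coeff 0 = 1 ∧
    (∏ i ∈ s, (1 + X + C (a i) * X ^ 2)).coeff 1 = (s.card : ℝ) ∧
    (∏ i ∈ s, (1 + X + C (a i) * X ^ 2)).coeff 2 =
      (∑ i ∈ s, a i) + ((s.card.choose 2 : ℕ) : ℝ) := by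
  induction s using Finset.induction_on with
  | empty => simp [Polynomial.coeff_one]
  | @insert i s hi ih =>
    obtain ⟨h0, h1, h2⟩ := ih
    rw [Finset.prod_insert hi]
    have c0 : (1 + X + C (a i) * X ^ 2 : ℝ[X]).coeff 0 = 1 := by simp
    have c1 : (1 + X + C (a i) * X ^ 2 : ℝ[X]).coeff 1 = 1 := by simp [Polynomial.coeff_one]
    have c2 : (1 + X + C (a i) * X ^ 2 : ℝ[X]).coeff 2 = a i := by simp [Polynomial.coeff_one, Polynomial.coeff_X]
    refine ⟨?_, ?_, ?_⟩
    · rw [Polynomial.coeff_mul, Finset.Nat.sum_antidiagonal_eq_sum_range_succ_mk]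
      simp [c0, h0]
    · rw [Polynomial.coeff_mul, Finset.Nat.sum_antidiagonal_eq_sum_range_succ_mk,
        Finset.sum_range_succ, Finset.sum_range_succ, Finset.sum_range_zero]
      simp only [Nat.sub_zero, Nat.sub_self, c0, c1, h0, h1, zero_add, one_mul, mul_one,
        Finset.card_insert_of_notMem hi]
      push_cast
      ring
    · rw [Polynomial.coeff_mul, Finset.Nat.sum_antidiagonal_eq_sum_range_succ_mk,
        Finset.sum_range_succ, Finset.sum_range_succ, Finset.sum_range_succ,
        Finset.sum_range_zero]
      simp only [Nat.sub_zero, Nat.sub_self, c0, c1, c2, h0, h1, h2, zero_add, one_mul, mul_one]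
      have h21 : (2:ℕ) - 1 = 1 := rfl
      rw [h21, c1] at *
      rw [Finset.sum_insert hi, Finset.card_insert_of_notMem hi]
      have hch : ((s.card + 1).choose 2 : ℝ) = ((s.card.choose 2 : ℕ) : ℝ) + s.card := by
        rw [Nat.choose_succ_succ]
        push_cast [Nat.choose_one_right]
        ring
      rw [hch]
      push_cast
      ring

theorem stmt4 (n : ℕ) (φ : Fin n → ℝ) (hφ : ∀ j, φ j ∈ Set.Ioo 0 (2 * Real.pi))
    (w : ℕ → ℝ) (hw : ∀ k, 0 ≤ w k)
    (hsupp : ∀ k, 2 * n < k → w k = 0)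
    (hpgf : ∀ z : ℝ,
      ∑ k ∈ Finset.range (2 * n + 1), w k * z ^ k =
        ∏ j : Fin n, (1 - 2 * z * Real.cos (φ j) + z ^ 2) / (2 * (1 - Real.cos (φ j)))) :
    (n : ℝ) / 2 ≤ ∑ j : Fin n, 1 / (1 - Real.cos (φ j)) ∧
      ∑ j : Fin n, 1 / (1 - Real.cos (φ j)) ≤ (n : ℝ) ^ 2 := by
  have hpos : ∀ j, 0 < 1 - Real.cos (φ j) := by
    intro j
    obtain ⟨h1, h2⟩ := hφ j
    have hne : Real.cos (φ j) ≠ 1 := by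
      intro hc
      have h0 : φ j = 0 := by
        have hl : -(2 * Real.pi) < φ j := by
          have := Real.pi_pos; linarith
        exact (Real.cos_eq_one_iff_of_lt_of_lt hl h2).mp hc
      linarith [h0 ▸ h1]
    have := Real.cos_le_one (φ j)
    rcases lt_or_eq_of_le this with h | h
    · linarith
    · exact absurd h hne
  set a : Fin n → ℝ := fun j => 1 / (2 * (1 - Real.cos (φ j))) with ha
  -- polynomial identity
  set P : ℝ[X] := ∑ k ∈ Finset.range (2 * n + 1), C (w k) * X ^ k with hP
  set Q : ℝ[X] := ∏ j : Fin n, (1 + X + C (a j) * X ^ 2) with hQ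
  have hPQ : ∀ t : ℝ, P.eval (1 + t) = Q.eval t := by
    intro t
    have h1 : P.eval (1 + t) = ∑ k ∈ Finset.range (2 * n + 1), w k * (1 + t) ^ k := by
      simp [hP, Polynomial.eval_finset_sum]
    have h2 : Q.eval t = ∏ j : Fin n, (1 + t + a j * t ^ 2) := by
      simp [hQ, Polynomial.eval_prod]
    rw [h1, h2, hpgf (1 + t)]
    apply Finset.prod_congr rfl
    intro j _
    have hj := (hpos j).ne'
    rw [ha]
    field_simp
    ring
  -- so the polynomial P ∘ (1 + X) equals Q
  have hcomp : P.comp (1 + X) = Q := by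
    apply Polynomial.funext
    intro t
    rw [Polynomial.eval_comp]
    simp only [Polynomial.eval_add, Polynomial.eval_one, Polynomial.eval_X]
    exact hPQ t
  -- coefficients of P.comp (1 + X)
  have hPcomp : P.comp (1 + X) =
      ∑ k ∈ Finset.range (2 * n + 1), C (w k) * (1 + X) ^ k := by
    simp [hP, Polynomial.add_comp, Polynomial.sum_comp, Polynomial.mul_comp,
      Polynomial.pow_comp, Polynomial.C_comp, Polynomial.X_comp]
  have hcoeff : ∀ m : ℕ, (∑ k ∈ Finset.range (2 * n + 1), w k * (k.choose m : ℝ)) =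
      Q.coeff m := by
    intro m
    rw [← hcomp, hPcomp, Polynomial.finset_sum_coeff]
    apply Finset.sum_congr rfl
    intro k _
    rw [Polynomial.coeff_C_mul, Polynomial.coeff_one_add_X_pow]
  obtain ⟨q0, q1, q2⟩ := prod_coeffs (Finset.univ : Finset (Fin n)) a
  rw [hQ] at hcoeff
  have e0 : ∑ k ∈ Finset.range (2 * n + 1), w k = 1 := by
    have := hcoeff 0
    rw [q0] at this
    simpa using this
  have e1 : ∑ k ∈ Finset.range (2 * n + 1), w k * (k : ℝ) = n := by
    have := hcoeff 1
    rw [q1] at this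
    simpa [Nat.choose_one_right] using this
  have e2 : ∑ k ∈ Finset.range (2 * n + 1), w k * ((k : ℝ) * (k - 1) / 2) =
      (∑ j : Fin n, a j) + (n : ℝ) * (n - 1) / 2 := by
    have := hcoeff 2
    rw [q2] at this
    simp only [Finset.card_univ, Fintype.card_fin] at this
    rw [Nat.cast_choose_two] at this
    rw [← this]
    apply Finset.sum_congr rfl
    intro k _
    rw [Nat.cast_choose_two]
  -- key: σ² = ∑ w k (k - n)²
  have key : (∑ j : Fin n, 1 / (1 - Real.cos (φ j))) =
      ∑ k ∈ Finset.range (2 * n + 1), w k * ((k : ℝ) - n) ^ 2 := by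
    have hσa : (∑ j : Fin n, 1 / (1 - Real.cos (φ j))) = 2 * ∑ j : Fin n, a j := by
      rw [Finset.mul_sum]
      apply Finset.sum_congr rfl
      intro j _
      have hj := (hpos j).ne'
      rw [ha]
      field_simp
    have expand : ∀ k : ℕ, w k * ((k : ℝ) - n) ^ 2 =
        2 * (w k * ((k : ℝ) * (k - 1) / 2)) + (1 - 2 * n) * (w k * k) + n ^ 2 * w k := by
      intro k; ring
    rw [hσa]
    calc 2 * ∑ j : Fin n, a j
        = 2 * ((∑ j : Fin n, a j) + (n : ℝ) * (n - 1) / 2)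
          + (1 - 2 * n) * (n : ℝ) + (n : ℝ) ^ 2 * 1 := by ring
      _ = 2 * (∑ k ∈ Finset.range (2 * n + 1), w k * ((k : ℝ) * (k - 1) / 2))
          + (1 - 2 * n) * (∑ k ∈ Finset.range (2 * n + 1), w k * (k : ℝ))
          + (n : ℝ) ^ 2 * (∑ k ∈ Finset.range (2 * n + 1), w k) := by
            rw [e0, e1, e2]
      _ = ∑ k ∈ Finset.range (2 * n + 1), w k * ((k : ℝ) - n) ^ 2 := by
            rw [Finset.mul_sum, Finset.mul_sum, Finset.mul_sum, ← Finset.sum_add_distrib,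
              ← Finset.sum_add_distrib]
            apply Finset.sum_congr rfl
            intro k _
            rw [expand k]
  constructor
  · -- lower bound: each term ≥ 1/2
    have : ∀ j : Fin n, (1:ℝ) / 2 ≤ 1 / (1 - Real.cos (φ j)) := by
      intro j
      apply one_div_le_one_div_of_le (hpos j)
      have := Real.neg_one_le_cos (φ j)
      linarith
    calc (n : ℝ) / 2 = ∑ _j : Fin n, (1:ℝ) / 2 := by
          simp [Finset.sum_const]; ring
      _ ≤ ∑ j : Fin n, 1 / (1 - Real.cos (φ j)) := Finset.sum_le_sum fun j _ => this j
  · -- upper bound: variance ≤ n²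
    rw [key]
    calc ∑ k ∈ Finset.range (2 * n + 1), w k * ((k : ℝ) - n) ^ 2
        ≤ ∑ k ∈ Finset.range (2 * n + 1), w k * (n : ℝ) ^ 2 := by
          apply Finset.sum_le_sum
          intro k hk
          apply mul_le_mul_of_nonneg_left _ (hw k)
          rw [Finset.mem_range] at hk
          have hkn : (k : ℝ) ≤ 2 * n := by
            have : k ≤ 2 * n := by omega
            exact_mod_cast this
          have hk0 : (0 : ℝ) ≤ k := Nat.cast_nonneg k
          nlinarith
      _ = (n : ℝ) ^ 2 := by rw [← Finset.sum_mul, e0, one_mul]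
end

section
/- Under the root-unitary setup with σ² = ∑ 1/(1 - cos φ_j) and ω = σ^{-4} ∑ 1/(1 - cos φ_j)², the fourth normalized central moment satisfies E((X - n)/σ)⁴ = 3 + σ^{-2} - 3ω. -/
open Polynomial

/-- The operator `P ↦ X·P' - c·P`.  On `X^k` it acts as multiplication by `(k - c)`. -/
noncomputable def Lop (c : ℝ) (P : ℝ[X]) : ℝ[X] := X * derivative P - C c * P

lemma Lop_add (c : ℝ) (P Q : ℝ[X]) : Lop c (P + Q) = Lop c P + Lop c Q := by
  simp only [Lop, derivative_add]; ring

lemma Lop_mul (c d : ℝ) (P Q : ℝ[X]) :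
    Lop (c + d) (P * Q) = Lop c P * Q + P * Lop d Q := by
  simp only [Lop, derivative_mul, C_add]; ring

/-- `Mo m c P = ∑ coeff k P * (k - c)^m`, realized through iterates of `Lop`. -/
noncomputable def Mo (m : ℕ) (c : ℝ) (P : ℝ[X]) : ℝ := (((Lop c)^[m]) P).eval 1

lemma Mo_succ (m : ℕ) (c : ℝ) (P : ℝ[X]) : Mo (m + 1) c P = Mo m c (Lop c P) := by
  simp [Mo, Function.iterate_succ_apply]

lemma Mo_add (m : ℕ) (c : ℝ) (P Q : ℝ[X]) : Mo m c (P + Q) = Mo m c P + Mo m c Q := by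
  induction m generalizing P Q with
  | zero => simp [Mo]
  | succ m ih => rw [Mo_succ, Lop_add, ih, Mo_succ, Mo_succ]

lemma Mo_mul0 (c d : ℝ) (P Q : ℝ[X]) :
    Mo 0 (c + d) (P * Q) = Mo 0 c P * Mo 0 d Q := by
  simp [Mo]

lemma Mo_mul1 (c d : ℝ) (P Q : ℝ[X]) :
    Mo 1 (c + d) (P * Q) = Mo 1 c P * Mo 0 d Q + Mo 0 c P * Mo 1 d Q := by
  rw [Mo_succ, Lop_mul, Mo_add]
  simp [Mo]

lemma Mo_mul2 (c d : ℝ) (P Q : ℝ[X]) :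
    Mo 2 (c + d) (P * Q) = Mo 2 c P * Mo 0 d Q + 2 * (Mo 1 c P * Mo 1 d Q)
      + Mo 0 c P * Mo 2 d Q := by
  rw [show (2:ℕ) = 1 + 1 from rfl, Mo_succ, Lop_mul, Mo_add, Mo_mul1, Mo_mul1]
  simp [Mo, Function.iterate_succ_apply]
  ring

lemma Mo_mul3 (c d : ℝ) (P Q : ℝ[X]) :
    Mo 3 (c + d) (P * Q) = Mo 3 c P * Mo 0 d Q + 3 * (Mo 2 c P * Mo 1 d Q)
      + 3 * (Mo 1 c P * Mo 2 d Q) + Mo 0 c P * Mo 3 d Q := by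
  rw [show (3:ℕ) = 2 + 1 from rfl, Mo_succ, Lop_mul, Mo_add, Mo_mul2, Mo_mul2]
  simp only [Mo, Function.iterate_succ_apply, Function.iterate_zero, id_eq]
  ring

lemma Mo_mul4 (c d : ℝ) (P Q : ℝ[X]) :
    Mo 4 (c + d) (P * Q) = Mo 4 c P * Mo 0 d Q + 4 * (Mo 3 c P * Mo 1 d Q)
      + 6 * (Mo 2 c P * Mo 2 d Q) + 4 * (Mo 1 c P * Mo 3 d Q) + Mo 0 c P * Mo 4 d Q := by
  have h : Mo 4 (c + d) (P * Q) = Mo 3 (c + d) (Lop (c + d) (P * Q)) := Mo_succ 3 _ _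
  rw [h, Lop_mul, Mo_add, Mo_mul3, Mo_mul3]
  simp only [Mo, Function.iterate_succ_apply, Function.iterate_zero, id_eq]
  ring

/-- Moments of a symmetric quadratic `a X² + b X + a` about center 1. -/
lemma Lop_symquad (a b : ℝ) :
    Lop 1 (C a * X ^ 2 + C b * X + C a) = C a * X ^ 2 - C a := by
  simp only [Lop, derivative_add, derivative_mul, derivative_C, derivative_X_pow,
    derivative_X, map_one, Nat.cast_ofNat, map_ofNat]
  ring

lemma Lop_cyc1 (a : ℝ) : Lop 1 (C a * X ^ 2 - C a) = C a * X ^ 2 + C a := by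
  simp only [Lop, derivative_sub, derivative_mul, derivative_C, derivative_X_pow, map_one, Nat.cast_ofNat, map_ofNat]
  ring

lemma Lop_cyc2 (a : ℝ) : Lop 1 (C a * X ^ 2 + C a) = C a * X ^ 2 - C a := by
  simp only [Lop, derivative_add, derivative_mul, derivative_C, derivative_X_pow, map_one, Nat.cast_ofNat, map_ofNat]
  ring

lemma Mo_symquad (a b : ℝ) (P : ℝ[X]) (hP : P = C a * X ^ 2 + C b * X + C a) :
    Mo 0 1 P = 2 * a + b ∧ Mo 1 1 P = 0 ∧ Mo 2 1 P = 2 * a ∧ Mo 3 1 P = 0 ∧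
      Mo 4 1 P = 2 * a := by
  subst hP
  have h0 : Mo 0 1 (C a * X ^ 2 + C b * X + C a) = 2 * a + b := by simp [Mo]; ring
  have e1 : ((Lop 1)^[1]) (C a * X ^ 2 + C b * X + C a) = C a * X ^ 2 - C a := by
    simp [Function.iterate_one, Lop_symquad]
  have e2 : ((Lop 1)^[2]) (C a * X ^ 2 + C b * X + C a) = C a * X ^ 2 + C a := by
    rw [Function.iterate_succ_apply', e1, Lop_cyc1]
  have e3 : ((Lop 1)^[3]) (C a * X ^ 2 + C b * X + C a) = C a * X ^ 2 - C a := by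
    rw [Function.iterate_succ_apply', e2, Lop_cyc2]
  have e4 : ((Lop 1)^[4]) (C a * X ^ 2 + C b * X + C a) = C a * X ^ 2 + C a := by
    rw [Function.iterate_succ_apply', e3, Lop_cyc1]
  refine ⟨h0, ?_, ?_, ?_, ?_⟩ <;> simp only [Mo] <;>
    [rw [e1]; rw [e2]; rw [e3]; rw [e4]] <;> simp <;> ring

/-- Moments of `C a * X^k`. -/
lemma Lop_monomial (c a : ℝ) (k : ℕ) :
    Lop c (C a * X ^ k) = C (a * ((k : ℝ) - c)) * X ^ k := by
  cases k with
  | zero => simp [Lop]; ring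
  | succ k =>
    simp only [Lop, derivative_mul, derivative_C, derivative_X_pow]
    push_cast
    rw [zero_mul, zero_add]
    rw [show X * (C a * (C ((k:ℝ) + 1) * X ^ k)) = C (a * ((k:ℝ)+1)) * (X * X ^ k) by
      simp [map_mul]; ring]
    rw [← pow_succ']
    simp [map_mul, map_sub]
    ring

lemma Mo_monomial (m : ℕ) (c a : ℝ) (k : ℕ) :
    Mo m c (C a * X ^ k) = a * ((k : ℝ) - c) ^ m := by
  induction m generalizing a with
  | zero => simp [Mo]
  | succ m ih =>
    rw [Mo_succ, Lop_monomial, ih]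
    ring

lemma Mo_sum (m : ℕ) (c : ℝ) {ι : Type*} (s : Finset ι) (f : ι → ℝ[X]) :
    Mo m c (∑ i ∈ s, f i) = ∑ i ∈ s, Mo m c (f i) := by
  classical
  induction s using Finset.induction_on with
  | empty =>
    simp only [Finset.sum_empty]
    induction m with
    | zero => simp [Mo]
    | succ m ih => rw [Mo_succ]; simpa [Lop] using ih
  | @insert a s h ih =>
    rw [Finset.sum_insert h, Mo_add, ih, Finset.sum_insert h]

/-- Moments of a product of factors each with moments `1, 0, μ i, 0, μ i` about center 1. -/
lemma Mo_prod {ι : Type*} [DecidableEq ι] (s : Finset ι) (f : ι → ℝ[X]) (μ : ι → ℝ)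
    (h0 : ∀ i ∈ s, Mo 0 1 (f i) = 1) (h1 : ∀ i ∈ s, Mo 1 1 (f i) = 0)
    (h2 : ∀ i ∈ s, Mo 2 1 (f i) = μ i) (h3 : ∀ i ∈ s, Mo 3 1 (f i) = 0)
    (h4 : ∀ i ∈ s, Mo 4 1 (f i) = μ i) :
    Mo 0 (s.card : ℝ) (∏ i ∈ s, f i) = 1 ∧
    Mo 1 (s.card : ℝ) (∏ i ∈ s, f i) = 0 ∧
    Mo 2 (s.card : ℝ) (∏ i ∈ s, f i) = ∑ i ∈ s, μ i ∧
    Mo 3 (s.card : ℝ) (∏ i ∈ s, f i) = 0 ∧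
    Mo 4 (s.card : ℝ) (∏ i ∈ s, f i) =
      3 * (∑ i ∈ s, μ i) ^ 2 - 3 * (∑ i ∈ s, μ i ^ 2) + ∑ i ∈ s, μ i := by
  induction s using Finset.induction_on with
  | empty =>
    simp only [Finset.prod_empty, Finset.sum_empty, Finset.card_empty, Nat.cast_zero]
    rw [show (1:ℝ[X]) = C 1 * X ^ 0 by simp]
    simp only [Mo_monomial]
    norm_num
  | @insert a s ha ih =>
    have fa0 := h0 a (Finset.mem_insert_self a s)
    have fa1 := h1 a (Finset.mem_insert_self a s)
    have fa2 := h2 a (Finset.mem_insert_self a s)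
    have fa3 := h3 a (Finset.mem_insert_self a s)
    have fa4 := h4 a (Finset.mem_insert_self a s)
    obtain ⟨i0, i1, i2, i3, i4⟩ := ih
      (fun i hi => h0 i (Finset.mem_insert_of_mem hi))
      (fun i hi => h1 i (Finset.mem_insert_of_mem hi))
      (fun i hi => h2 i (Finset.mem_insert_of_mem hi))
      (fun i hi => h3 i (Finset.mem_insert_of_mem hi))
      (fun i hi => h4 i (Finset.mem_insert_of_mem hi))
    rw [Finset.prod_insert ha, Finset.sum_insert ha, Finset.sum_insert ha]
    have hc : ((insert a s).card : ℝ) = 1 + (s.card : ℝ) := by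
      rw [Finset.card_insert_of_notMem ha]; push_cast; ring
    rw [hc]
    refine ⟨?_, ?_, ?_, ?_, ?_⟩
    · rw [Mo_mul0, fa0, i0]; ring
    · rw [Mo_mul1, fa0, fa1, i0, i1]; ring
    · rw [Mo_mul2, fa0, fa1, fa2, i0, i1, i2]; ring
    · rw [Mo_mul3, fa0, fa1, fa2, fa3, i0, i1, i2, i3]; ring
    · rw [Mo_mul4, fa0, fa1, fa2, fa3, fa4, i0, i1, i2, i3, i4]; ring

theorem stmt6 (n : ℕ) (hn : 0 < n)
    (φ : Fin n → ℝ) (hφ : ∀ j, φ j ∈ Set.Ioo 0 (2 * Real.pi))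
    (w : ℕ → ℝ) (hw : ∀ k, 0 ≤ w k)
    (hsupp : ∀ k, 2 * n < k → w k = 0)
    (hpgf : ∀ z : ℝ,
      ∑ k ∈ Finset.range (2 * n + 1), w k * z ^ k =
        ∏ j : Fin n, (1 - 2 * z * Real.cos (φ j) + z ^ 2) / (2 * (1 - Real.cos (φ j)))) :
    (∑ k ∈ Finset.range (2 * n + 1),
        w k * (((k : ℝ) - n) / Real.sqrt (∑ j : Fin n, 1 / (1 - Real.cos (φ j)))) ^ 4) =
      3 + 1 / (∑ j : Fin n, 1 / (1 - Real.cos (φ j)))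
        - 3 * ((∑ j : Fin n, 1 / (1 - Real.cos (φ j)) ^ 2)
            / (∑ j : Fin n, 1 / (1 - Real.cos (φ j))) ^ 2) := by
  classical
  -- positivity of 1 - cos φ j
  have ht : ∀ j : Fin n, 0 < 1 - Real.cos (φ j) := by
    intro j
    obtain ⟨h1, h2⟩ := hφ j
    have hs : 0 < Real.sin (φ j / 2) :=
      Real.sin_pos_of_pos_of_lt_pi (by linarith) (by linarith)
    have : Real.sin (φ j / 2) ^ 2 = 1 / 2 - Real.cos (2 * (φ j / 2)) / 2 :=
      Real.sin_sq_eq_half_sub _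
    rw [show 2 * (φ j / 2) = φ j by ring] at this
    nlinarith
  set μ : Fin n → ℝ := fun j => 1 / (1 - Real.cos (φ j)) with hμ
  -- the factors
  set F : Fin n → ℝ[X] := fun j =>
    C (1 / (2 * (1 - Real.cos (φ j)))) * X ^ 2
      + C (-(Real.cos (φ j)) / (1 - Real.cos (φ j))) * X
      + C (1 / (2 * (1 - Real.cos (φ j)))) with hF
  -- the coefficient polynomial
  set W : ℝ[X] := ∑ k ∈ Finset.range (2 * n + 1), C (w k) * X ^ k with hW
  have hWF : W = ∏ j : Fin n, F j := by
    apply Polynomial.funext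
    intro z
    rw [hW, hF]
    simp only [eval_finset_sum, eval_prod, eval_add, eval_mul, eval_pow, eval_C, eval_X]
    rw [hpgf z]
    apply Finset.prod_congr rfl
    intro j _
    have h := (ht j).ne'
    field_simp
    ring
  -- per-factor moments
  have hfac : ∀ j : Fin n, Mo 0 1 (F j) = 1 ∧ Mo 1 1 (F j) = 0 ∧ Mo 2 1 (F j) = μ j ∧
      Mo 3 1 (F j) = 0 ∧ Mo 4 1 (F j) = μ j := by
    intro j
    have h := (ht j).ne'
    obtain ⟨m0, m1, m2, m3, m4⟩ :=
      Mo_symquad (1 / (2 * (1 - Real.cos (φ j)))) (-(Real.cos (φ j)) / (1 - Real.cos (φ j)))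
        (F j) rfl
    refine ⟨?_, m1, ?_, m3, ?_⟩
    · rw [m0]; field_simp; ring
    · rw [m2, hμ]; field_simp
    · rw [m4, hμ]; field_simp
  obtain ⟨p0, p1, p2, p3, p4⟩ := Mo_prod Finset.univ F μ
    (fun i _ => (hfac i).1) (fun i _ => (hfac i).2.1) (fun i _ => (hfac i).2.2.1)
    (fun i _ => (hfac i).2.2.2.1) (fun i _ => (hfac i).2.2.2.2)
  rw [Finset.card_univ, Fintype.card_fin] at p4
  have hMoW : Mo 4 (n : ℝ) W = ∑ k ∈ Finset.range (2 * n + 1), w k * ((k : ℝ) - n) ^ 4 := by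
    rw [hW, Mo_sum]
    exact Finset.sum_congr rfl fun k _ => Mo_monomial 4 _ _ _
  have key : (∑ k ∈ Finset.range (2 * n + 1), w k * ((k : ℝ) - n) ^ 4) =
      3 * (∑ j : Fin n, μ j) ^ 2 - 3 * (∑ j : Fin n, μ j ^ 2) + ∑ j : Fin n, μ j := by
    rw [← hMoW, hWF, p4]
  set S : ℝ := ∑ j : Fin n, 1 / (1 - Real.cos (φ j)) with hS
  have hSμ : S = ∑ j : Fin n, μ j := rfl
  have hSpos : 0 < S := by
    rw [hS]
    apply Finset.sum_pos (fun j _ => by have := ht j; positivity)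
    exact Finset.univ_nonempty_iff.mpr (Fin.pos_iff_nonempty.mp hn)
  have hsqrt : Real.sqrt S ^ 4 = S ^ 2 := by
    rw [show (4:ℕ) = 2 * 2 from rfl, pow_mul, Real.sq_sqrt hSpos.le]
  have hT : (∑ j : Fin n, 1 / (1 - Real.cos (φ j)) ^ 2) = ∑ j : Fin n, μ j ^ 2 := by
    apply Finset.sum_congr rfl
    intro j _
    rw [hμ]
    simp [div_pow]
  calc (∑ k ∈ Finset.range (2 * n + 1), w k * (((k : ℝ) - n) / Real.sqrt S) ^ 4)
      = (∑ k ∈ Finset.range (2 * n + 1), w k * ((k : ℝ) - n) ^ 4) / S ^ 2 := by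
        rw [Finset.sum_div]
        apply Finset.sum_congr rfl
        intro k _
        rw [div_pow, hsqrt]
        ring
    _ = (3 * S ^ 2 - 3 * (∑ j : Fin n, μ j ^ 2) + S) / S ^ 2 := by
        rw [key, hSμ]
    _ = 3 + 1 / S - 3 * ((∑ j : Fin n, 1 / (1 - Real.cos (φ j)) ^ 2) / S ^ 2) := by
        rw [hT]
        field_simp
        ring
end

section
/- Under the root-unitary setup, the fourth normalized central moment satisfies 1 ≤ E((X - n)/σ)⁴ ≤ 3 - 1/(2σ²) < 3. -/
open Polynomial

lemma mulCoeff2 (b : ℝ) (p : ℝ[X]) (k : ℕ) :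
    ((C b * X ^ 2 + X + 1) * p).coeff (k + 2) =
      b * p.coeff k + p.coeff (k + 1) + p.coeff (k + 2) := by
  have h2 : (C b * X ^ 2 + X + 1) * p = C b * (X * (X * p)) + X * p + p := by ring
  rw [h2]
  simp [coeff_C_mul, coeff_X_mul]

lemma mulCoeff0 (b : ℝ) (p : ℝ[X]) :
    ((C b * X ^ 2 + X + 1) * p).coeff 0 = p.coeff 0 := by
  have h2 : (C b * X ^ 2 + X + 1) * p = C b * (X * (X * p)) + X * p + p := by ring
  rw [h2]
  simp [coeff_C_mul, mul_coeff_zero]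

lemma mulCoeff1 (b : ℝ) (p : ℝ[X]) :
    ((C b * X ^ 2 + X + 1) * p).coeff 1 = p.coeff 0 + p.coeff 1 := by
  have h2 : (C b * X ^ 2 + X + 1) * p = C b * (X * (X * p)) + X * p + p := by ring
  rw [h2]
  have : (X * (X * p)).coeff 1 = (X*p).coeff 0 := coeff_X_mul _ 0
  simp [coeff_C_mul, this, mul_coeff_zero, coeff_X_mul]

lemma prodCoeff {ι : Type*} (s : Finset ι) (a : ι → ℝ) :
    (∏ j ∈ s, (C (a j) * X ^ 2 + X + 1)).coeff 0 = 1 ∧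
    (∏ j ∈ s, (C (a j) * X ^ 2 + X + 1)).coeff 1 = (s.card : ℝ) ∧
    (∏ j ∈ s, (C (a j) * X ^ 2 + X + 1)).coeff 2 =
      (s.card : ℝ) * (s.card - 1) / 2 + ∑ j ∈ s, a j ∧
    (∏ j ∈ s, (C (a j) * X ^ 2 + X + 1)).coeff 3 =
      (s.card : ℝ) * (s.card - 1) * (s.card - 2) / 6 + ((s.card : ℝ) - 1) * ∑ j ∈ s, a j ∧
    (∏ j ∈ s, (C (a j) * X ^ 2 + X + 1)).coeff 4 =
      (s.card : ℝ) * (s.card - 1) * (s.card - 2) * (s.card - 3) / 24 +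
        ((s.card : ℝ) - 1) * ((s.card : ℝ) - 2) / 2 * ∑ j ∈ s, a j +
        ((∑ j ∈ s, a j) ^ 2 - ∑ j ∈ s, (a j) ^ 2) / 2 := by
  classical
  induction s using Finset.induction_on with
  | empty => simp [Polynomial.coeff_one]
  | insert _ _ hi =>
    rename_i i s ih
    obtain ⟨h0, h1, h2, h3, h4⟩ := ih
    rw [Finset.prod_insert hi]
    have c2 := mulCoeff2 (a i) (∏ j ∈ s, (C (a j) * X ^ 2 + X + 1))
    have e0 := mulCoeff0 (a i) (∏ j ∈ s, (C (a j) * X ^ 2 + X + 1))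
    have e1 := mulCoeff1 (a i) (∏ j ∈ s, (C (a j) * X ^ 2 + X + 1))
    have e2 := c2 0
    have e3 := c2 1
    have e4 := c2 2
    norm_num at e2 e3 e4
    rw [Finset.card_insert_of_notMem hi, Finset.sum_insert hi, Finset.sum_insert hi]
    push_cast
    refine ⟨by rw [e0, h0], by rw [e1, h0, h1]; ring,
      by rw [e2, h0, h1, h2]; ring, by rw [e3, h1, h2, h3]; ring,
      by rw [e4, h2, h3, h4]; ring⟩

lemma chooseCast (k : ℕ) :
    ((k.choose 2 : ℝ) = k * (k - 1) / 2) ∧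
    ((k.choose 3 : ℝ) = k * (k - 1) * (k - 2) / 6) ∧
    ((k.choose 4 : ℝ) = k * (k - 1) * (k - 2) * (k - 3) / 24) := by
  induction k with
  | zero => norm_num
  | succ k ih =>
    obtain ⟨i2, i3, i4⟩ := ih
    refine ⟨?_, ?_, ?_⟩
    · rw [Nat.choose_succ_succ]
      push_cast [Nat.choose_one_right, i2]
      ring
    · rw [Nat.choose_succ_succ]
      push_cast [i2, i3]
      ring
    · rw [Nat.choose_succ_succ]
      push_cast [i3, i4]
      ring

theorem stmt7 (n : ℕ) (hn : 0 < n)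
    (φ : Fin n → ℝ) (hφ : ∀ j, φ j ∈ Set.Ioo 0 (2 * Real.pi))
    (w : ℕ → ℝ) (hw : ∀ k, 0 ≤ w k)
    (hsupp : ∀ k, 2 * n < k → w k = 0)
    (hpgf : ∀ z : ℝ,
      ∑ k ∈ Finset.range (2 * n + 1), w k * z ^ k =
        ∏ j : Fin n, (1 - 2 * z * Real.cos (φ j) + z ^ 2) / (2 * (1 - Real.cos (φ j)))) :
    1 ≤ (∑ k ∈ Finset.range (2 * n + 1),
          w k * (((k : ℝ) - n) / Real.sqrt (∑ j : Fin n, 1 / (1 - Real.cos (φ j)))) ^ 4) ∧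
      (∑ k ∈ Finset.range (2 * n + 1),
          w k * (((k : ℝ) - n) / Real.sqrt (∑ j : Fin n, 1 / (1 - Real.cos (φ j)))) ^ 4) ≤
        3 - 1 / (2 * (∑ j : Fin n, 1 / (1 - Real.cos (φ j)))) ∧
      3 - 1 / (2 * (∑ j : Fin n, 1 / (1 - Real.cos (φ j)))) < 3 := by
  -- cosines are < 1
  have hc : ∀ j, Real.cos (φ j) < 1 := by
    intro j
    obtain ⟨h1, h2⟩ := hφ j
    refine lt_of_le_of_ne (Real.cos_le_one _) (fun h => ?_)
    rw [Real.cos_eq_one_iff] at h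
    obtain ⟨m, hm⟩ := h
    have hπ := Real.pi_pos
    have hm0 : (0:ℝ) < (m:ℝ) := by nlinarith
    have hm1 : (1:ℝ) ≤ (m:ℝ) := by exact_mod_cast (by exact_mod_cast hm0 : (0:ℤ) < m)
    nlinarith
  have hcne : ∀ j, (1:ℝ) - Real.cos (φ j) ≠ 0 := fun j => sub_ne_zero.2 (hc j).ne'
  have hcpos : ∀ j, (0:ℝ) < 1 - Real.cos (φ j) := fun j => sub_pos.2 (hc j)
  set v : Fin n → ℝ := fun j => 1 / (1 - Real.cos (φ j)) with hv_def
  set a : Fin n → ℝ := fun j => v j / 2 with ha_def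
  set S : ℝ := ∑ j : Fin n, v j with hS_def
  have hvpos : ∀ j, 0 < v j := fun j => div_pos one_pos (hcpos j)
  have hvhalf : ∀ j, (1:ℝ)/2 ≤ v j := by
    intro j
    have h2 : 1 - Real.cos (φ j) ≤ 2 := by
      have := Real.neg_one_le_cos (φ j); linarith
    rw [hv_def]
    rw [div_le_div_iff₀ two_pos (hcpos j)]
    linarith
  have hSpos : 0 < S := by
    rw [hS_def]
    apply Finset.sum_pos (fun j _ => hvpos j)
    exact Finset.univ_nonempty_iff.2 (Fin.pos_iff_nonempty.1 hn)
  -- the polynomial identity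
  open Polynomial in
  have hPQ : (∑ k ∈ Finset.range (2*n+1), C (w k) * (X + 1) ^ k) =
      ∏ j : Fin n, (C (a j) * X ^ 2 + X + 1) := by
    apply Polynomial.funext
    intro y
    rw [Polynomial.eval_finset_sum, Polynomial.eval_prod]
    simp only [eval_mul, eval_pow, eval_add, eval_C, eval_X, eval_one]
    rw [show (∑ i ∈ Finset.range (2*n+1), w i * (y+1)^i) =
        ∏ j : Fin n, (1 - 2*(y+1)*Real.cos (φ j) + (y+1)^2) / (2*(1 - Real.cos (φ j)))
      from hpgf (y+1)]
    apply Finset.prod_congr rfl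
    intro j _
    rw [div_eq_iff (mul_pos two_pos (hcpos j)).ne']
    simp only [ha_def, hv_def]
    field_simp [hcne j]
    ring
  -- coefficient identities
  have hco : ∀ m, (∑ k ∈ Finset.range (2*n+1), w k * (k.choose m : ℝ)) =
      (∏ j : Fin n, (C (a j) * X ^ 2 + X + 1)).coeff m := by
    intro m
    rw [← hPQ, Polynomial.finset_sum_coeff]
    apply Finset.sum_congr rfl
    intro k _
    rw [Polynomial.coeff_C_mul, Polynomial.coeff_X_add_one_pow]
  obtain ⟨q0, q1, q2, q3, q4⟩ := prodCoeff Finset.univ a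
  rw [Finset.card_univ, Fintype.card_fin] at q1 q2 q3 q4
  set A : ℝ := ∑ j : Fin n, a j with hA_def
  set Qa : ℝ := ∑ j : Fin n, (a j)^2 with hQa_def
  have h0 : ∑ k ∈ Finset.range (2*n+1), w k = 1 := by
    have e := hco 0; rw [q0] at e
    simpa using e
  have h1 : ∑ k ∈ Finset.range (2*n+1), w k * (k:ℝ) = n := by
    have e := hco 1; rw [q1] at e
    simpa [Nat.choose_one_right] using e
  have h2 : ∑ k ∈ Finset.range (2*n+1), w k * ((k:ℝ)*(k-1)/2) = (n:ℝ)*(n-1)/2 + A := by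
    have e := hco 2; rw [q2] at e
    rw [← e]
    exact Finset.sum_congr rfl fun k _ => by rw [(chooseCast k).1]
  have h3 : ∑ k ∈ Finset.range (2*n+1), w k * ((k:ℝ)*(k-1)*(k-2)/6) =
      (n:ℝ)*(n-1)*(n-2)/6 + ((n:ℝ)-1)*A := by
    have e := hco 3; rw [q3] at e
    rw [← e]
    exact Finset.sum_congr rfl fun k _ => by rw [(chooseCast k).2.1]
  have h4 : ∑ k ∈ Finset.range (2*n+1), w k * ((k:ℝ)*(k-1)*(k-2)*(k-3)/24) =
      (n:ℝ)*(n-1)*(n-2)*(n-3)/24 + ((n:ℝ)-1)*((n:ℝ)-2)/2*A + (A^2 - Qa)/2 := by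
    have e := hco 4; rw [q4] at e
    rw [← e]
    exact Finset.sum_congr rfl fun k _ => by rw [(chooseCast k).2.2]
  -- second central moment
  have hμ2 : ∑ k ∈ Finset.range (2*n+1), w k * ((k:ℝ) - n)^2 = 2*A := by
    have expand : ∀ k : ℕ, w k * ((k:ℝ) - n)^2 =
        2*(w k * ((k:ℝ)*(k-1)/2)) + (1-2*(n:ℝ))*(w k * (k:ℝ)) + (n:ℝ)^2 * w k :=
      fun k => by ring
    rw [Finset.sum_congr rfl fun k _ => expand k]
    rw [Finset.sum_add_distrib, Finset.sum_add_distrib, ← Finset.mul_sum, ← Finset.mul_sum,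
      ← Finset.mul_sum, h0, h1, h2]
    ring
  -- fourth central moment
  have hμ4 : ∑ k ∈ Finset.range (2*n+1), w k * ((k:ℝ) - n)^4 = 2*A + 12*A^2 - 12*Qa := by
    have expand : ∀ k : ℕ, w k * ((k:ℝ) - n)^4 =
        24*(w k * ((k:ℝ)*(k-1)*(k-2)*(k-3)/24)) +
        (36-24*(n:ℝ))*(w k * ((k:ℝ)*(k-1)*(k-2)/6)) +
        (14-24*(n:ℝ)+12*(n:ℝ)^2)*(w k * ((k:ℝ)*(k-1)/2)) +
        (1-4*(n:ℝ)+6*(n:ℝ)^2-4*(n:ℝ)^3)*(w k * (k:ℝ)) + (n:ℝ)^4 * w k :=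
      fun k => by ring
    rw [Finset.sum_congr rfl fun k _ => expand k]
    rw [Finset.sum_add_distrib, Finset.sum_add_distrib, Finset.sum_add_distrib,
      Finset.sum_add_distrib, ← Finset.mul_sum, ← Finset.mul_sum, ← Finset.mul_sum,
      ← Finset.mul_sum, ← Finset.mul_sum, h0, h1, h2, h3, h4]
    ring
  -- relate A, Qa to S, Qv
  set Qv : ℝ := ∑ j : Fin n, (v j)^2 with hQv_def
  have hSA : S = 2*A := by
    rw [hS_def, hA_def, Finset.mul_sum]
    exact Finset.sum_congr rfl fun j _ => by rw [ha_def]; ring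
  have hQva : Qv = 4*Qa := by
    rw [hQv_def, hQa_def, Finset.mul_sum]
    exact Finset.sum_congr rfl fun j _ => by rw [ha_def]; ring
  have hμ4' : ∑ k ∈ Finset.range (2*n+1), w k * ((k:ℝ) - n)^4 = S + 3*S^2 - 3*Qv := by
    rw [hμ4, hSA, hQva]; ring
  have hμ2' : ∑ k ∈ Finset.range (2*n+1), w k * ((k:ℝ) - n)^2 = S := by
    rw [hμ2, hSA]
  -- rewrite the target sum
  have hs4 : Real.sqrt S ^ 4 = S^2 := by
    rw [show (4:ℕ) = 2*2 from rfl, pow_mul, Real.sq_sqrt hSpos.le]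
  have hT : (∑ k ∈ Finset.range (2*n+1), w k * (((k:ℝ) - n) / Real.sqrt S) ^ 4) =
      (S + 3*S^2 - 3*Qv) / S^2 := by
    rw [← hμ4', Finset.sum_div]
    apply Finset.sum_congr rfl
    intro k _
    rw [div_pow, hs4, mul_div_assoc]
  -- lower bound pieces
  have hQvS : S/2 ≤ Qv := by
    rw [hS_def, hQv_def, Finset.sum_div]
    apply Finset.sum_le_sum
    intro j _
    have := hvhalf j
    nlinarith [hvpos j]
  have hCS : S^2 ≤ S + 3*S^2 - 3*Qv := by
    have key := Finset.sum_mul_sq_le_sq_mul_sq (Finset.range (2*n+1))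
      (fun k => Real.sqrt (w k)) (fun k => Real.sqrt (w k) * ((k:ℝ) - n)^2)
    have e1 : ∑ k ∈ Finset.range (2*n+1),
        Real.sqrt (w k) * (Real.sqrt (w k) * ((k:ℝ) - n)^2) = S := by
      rw [← hμ2']
      apply Finset.sum_congr rfl
      intro k _
      rw [← mul_assoc, Real.mul_self_sqrt (hw k)]
    have e2 : ∑ k ∈ Finset.range (2*n+1), (Real.sqrt (w k))^2 = 1 := by
      rw [← h0]
      exact Finset.sum_congr rfl fun k _ => Real.sq_sqrt (hw k)
    have e3 : ∑ k ∈ Finset.range (2*n+1), (Real.sqrt (w k) * ((k:ℝ) - n)^2)^2 =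
        S + 3*S^2 - 3*Qv := by
      rw [← hμ4']
      apply Finset.sum_congr rfl
      intro k _
      rw [mul_pow, Real.sq_sqrt (hw k), ← pow_mul]
    rw [e1, e2, e3, one_mul] at key
    exact key
  have hS2pos : 0 < S^2 := pow_pos hSpos 2
  refine ⟨?_, ?_, ?_⟩
  · rw [hT]
    exact (one_le_div hS2pos).2 hCS
  · rw [hT, div_le_iff₀ hS2pos]
    have h5 : 1/(2*S) * S^2 = S/2 := by
      rw [div_mul_eq_mul_div, one_mul, pow_two, mul_comm 2 S, mul_div_mul_left _ _ hSpos.ne']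
    have hexp : (3 - 1/(2*S)) * S^2 = 3*S^2 - S/2 := by rw [sub_mul, h5]
    rw [hexp]
    linarith
  · have : 0 < 1/(2*S) := div_pos one_pos (by linarith)
    linarith
end

section
/- Under the root-unitary setup, E(z^X) ≤ exp(n(z-1) + σ²(z-1)²/2) for all real z, where σ² is the variance of X. -/
theorem stmt11 (n : ℕ)
    (φ : Fin n → ℝ) (hφ : ∀ j, φ j ∈ Set.Ioo 0 (2 * Real.pi))
    (w : ℕ → ℝ) (hw : ∀ k, 0 ≤ w k)
    (hsupp : ∀ k, 2 * n < k → w k = 0)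
    (hpgf : ∀ z : ℝ,
      ∑ k ∈ Finset.range (2 * n + 1), w k * z ^ k =
        ∏ j : Fin n, (1 - 2 * z * Real.cos (φ j) + z ^ 2) / (2 * (1 - Real.cos (φ j)))) :
    ∀ z : ℝ,
      ∑ k ∈ Finset.range (2 * n + 1), w k * z ^ k ≤
        Real.exp ((n : ℝ) * (z - 1) +
          (∑ j : Fin n, 1 / (1 - Real.cos (φ j))) * (z - 1) ^ 2 / 2) := by
  intro z
  have hc : ∀ j : Fin n, Real.cos (φ j) < 1 := by
    intro j
    obtain ⟨h1, h2⟩ := hφ j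
    rcases lt_or_eq_of_le (Real.cos_le_one (φ j)) with h | h
    · exact h
    · exfalso
      have := (Real.cos_eq_one_iff_of_lt_of_lt (by linarith [Real.pi_pos]) h2).1 h
      linarith
  rw [hpgf z]
  have key : ∀ j : Fin n,
      (1 - 2 * z * Real.cos (φ j) + z ^ 2) / (2 * (1 - Real.cos (φ j))) ≤
        Real.exp ((z - 1) + 1 / (1 - Real.cos (φ j)) * (z - 1) ^ 2 / 2) := by
    intro j
    have hd : 0 < 1 - Real.cos (φ j) := by linarith [hc j]
    have heq : (1 - 2 * z * Real.cos (φ j) + z ^ 2) / (2 * (1 - Real.cos (φ j))) =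
        1 + ((z - 1) + 1 / (1 - Real.cos (φ j)) * (z - 1) ^ 2 / 2) := by
      field_simp
      ring
    rw [heq]
    linarith [Real.add_one_le_exp ((z - 1) + 1 / (1 - Real.cos (φ j)) * (z - 1) ^ 2 / 2)]
  calc ∏ j : Fin n, (1 - 2 * z * Real.cos (φ j) + z ^ 2) / (2 * (1 - Real.cos (φ j)))
      ≤ ∏ j : Fin n, Real.exp ((z - 1) + 1 / (1 - Real.cos (φ j)) * (z - 1) ^ 2 / 2) := by
        apply Finset.prod_le_prod
        · intro j _
          have hd : 0 < 1 - Real.cos (φ j) := by linarith [hc j]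
          have hnum : 0 ≤ 1 - 2 * z * Real.cos (φ j) + z ^ 2 := by
            nlinarith [Real.sin_sq_add_cos_sq (φ j), sq_nonneg (z - Real.cos (φ j)),
              sq_nonneg (Real.sin (φ j))]
          positivity
        · intro j _; exact key j
    _ = Real.exp ((n : ℝ) * (z - 1) +
          (∑ j : Fin n, 1 / (1 - Real.cos (φ j))) * (z - 1) ^ 2 / 2) := by
        rw [← Real.exp_sum]
        congr 1
        rw [Finset.sum_add_distrib, Finset.sum_const, Finset.card_univ, Fintype.card_fin,
          ← Finset.sum_div, ← Finset.sum_mul]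
        ring
end

section
/- For nonnegative integers n, k, j with k ≤ j, the combinatorial identity ∑_{m=0}^{n-k} C(m+k, k) C(n-m, k) C(m, j) = C(k+j, k) C(n+k+1, 2k+j+1) holds. -/
open Finset

/-- Hockey stick, range version. -/
lemma hockey (n b : ℕ) : ∑ i ∈ range (n + 1), i.choose b = (n + 1).choose (b + 1) := by
  rw [← Nat.sum_Icc_choose n b]
  refine (Finset.sum_subset ?_ ?_).symm
  · intro x hx
    simp only [mem_Icc] at hx
    simp only [mem_range]
    omega
  · intro x hx hx'
    simp only [mem_Icc, mem_range, not_and, not_le] at hx hx'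
    exact Nat.choose_eq_zero_of_lt (by omega)

/-- Vandermonde-type convolution: ∑_{r=0}^{s} C(r,a) C(s-r,b) = C(s+1, a+b+1). -/
lemma conv (s : ℕ) : ∀ a b : ℕ,
    ∑ r ∈ range (s + 1), r.choose a * (s - r).choose b = (s + 1).choose (a + b + 1) := by
  induction s with
  | zero =>
    intro a b
    cases a <;> cases b <;> simp [Nat.choose_eq_zero_of_lt]
  | succ s ih =>
    intro a b
    cases a with
    | zero =>
      simp only [Nat.choose_zero_right, one_mul, Nat.zero_add]
      rw [← Finset.sum_range_reflect (fun r => (s + 1 - r).choose b) (s + 2)]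
      have : ∀ r ∈ range (s + 2), (s + 1 - (s + 2 - 1 - r)).choose b = r.choose b := by
        intro r hr
        simp only [mem_range] at hr
        congr 1
        omega
      rw [Finset.sum_congr rfl this, hockey]
    | succ a =>
      rw [Finset.sum_range_succ' (fun r => r.choose (a + 1) * (s + 1 - r).choose b)]
      have hc : ∀ r ∈ range (s + 1),
          (r + 1).choose (a + 1) * (s + 1 - (r + 1)).choose b =
            r.choose a * (s - r).choose b + r.choose (a + 1) * (s - r).choose b := by
        intro r _
        rw [Nat.choose_succ_succ, Nat.succ_sub_succ]
        ring
      rw [Finset.sum_congr rfl hc, Finset.sum_add_distrib, ih a b, ih (a + 1) b,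
        Nat.choose_eq_zero_of_lt (show 0 < a + 1 by omega), zero_mul, add_zero]
      have he : (s + 1 + 1).choose (a + 1 + b + 1) =
          (s + 1).choose (a + b + 1) + (s + 1).choose (a + b + 1 + 1) := by
        rw [show a + 1 + b + 1 = (a + b + 1) + 1 by omega, Nat.choose_succ_succ]
      rw [he, show a + 1 + b + 1 = a + b + 1 + 1 from by omega]

theorem stmt15 (n k j : ℕ) (hkj : k ≤ j) :
    ∑ m ∈ Finset.range (n - k + 1),
        (m + k).choose k * (n - m).choose k * m.choose j =
      (k + j).choose k * (n + k + 1).choose (2 * k + j + 1) := by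
  -- Step 1: termwise identity C(m+k,k)C(m,j) = C(k+j,k)C(m+k,k+j)
  have key : ∀ m : ℕ, (m + k).choose k * (n - m).choose k * m.choose j =
      (k + j).choose k * ((m + k).choose (k + j) * (n - m).choose k) := by
    intro m
    rcases le_or_gt j m with hjm | hjm
    · have h := Nat.choose_mul (n := m + k) (k := k + j) (s := k) (show k ≤ k + j by omega)
      have h1 : m + k - k = m := by omega
      have h2 : k + j - k = j := by omega
      rw [h1, h2] at h
      calc (m + k).choose k * (n - m).choose k * m.choose j
          = (m + k).choose k * m.choose j * (n - m).choose k := by ring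
        _ = (m + k).choose (k + j) * (k + j).choose k * (n - m).choose k := by rw [← h]
        _ = (k + j).choose k * ((m + k).choose (k + j) * (n - m).choose k) := by ring
    · rw [Nat.choose_eq_zero_of_lt hjm, Nat.choose_eq_zero_of_lt (show m + k < k + j by omega)]
      ring
  rw [Finset.sum_congr rfl (fun m _ => key m), ← Finset.mul_sum]
  congr 1
  -- Step 2: extend the sum from range (n-k+1) to range (n+1)
  have ext : ∑ m ∈ range (n - k + 1), (m + k).choose (k + j) * (n - m).choose k =
      ∑ m ∈ range (n + 1), (m + k).choose (k + j) * (n - m).choose k := by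
    apply Finset.sum_subset
    · intro x hx; simp only [mem_range] at *; omega
    · intro x hx hx'
      simp only [mem_range, not_lt] at hx hx'
      rw [Nat.choose_eq_zero_of_lt (show n - x < k by omega), mul_zero]
  rw [ext]
  -- Step 3: shift index and apply convolution
  have shift : ∑ r ∈ range (n + k + 1), r.choose (k + j) * (n + k - r).choose k =
      ∑ m ∈ range (n + 1), (m + k).choose (k + j) * (n - m).choose k := by
    have hsplit : n + k + 1 = k + (n + 1) := by omega
    rw [hsplit, Finset.sum_range_add]
    have hz : ∀ i ∈ range k, i.choose (k + j) * (n + k - i).choose k = 0 := by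
      intro i hi
      simp only [mem_range] at hi
      rw [Nat.choose_eq_zero_of_lt (show i < k + j by omega), zero_mul]
    rw [Finset.sum_congr rfl hz, Finset.sum_const, smul_zero, zero_add]
    apply Finset.sum_congr rfl
    intro i hi
    simp only [mem_range] at hi
    congr 1
    · congr 1; omega
    · congr 1; omega
  rw [← shift, conv (n + k) (k + j) k]
  congr 1
  omega
end

section
/- For the Turán–Fejér random variable Z_{n,k}, the m-th moment is E(Z_{n,k}^m) = ∑_{ℓ=0}^m S(m,ℓ) ℓ! C(k+ℓ, k) C(n+k+1, 2k+ℓ+1) / C(n+k+1, 2k+1), where S(m,ℓ) are Stirling numbers of the second kind. -/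
/-- Stirling numbers of the second kind. -/
def stirling2 : ℕ → ℕ → ℕ
  | 0, 0 => 1
  | 0, _ + 1 => 0
  | _ + 1, 0 => 0
  | m + 1, l + 1 => (l + 1) * stirling2 m (l + 1) + stirling2 m l

open Finset

lemma tri_swap (N : ℕ) (g : ℕ → ℕ → ℕ) :
    ∑ i ∈ range (N + 1), ∑ t ∈ range (N - i + 1), g i t
      = ∑ s ∈ range (N + 1), ∑ i ∈ range (s + 1), g i (s - i) := by
  rw [Finset.sum_sigma', Finset.sum_sigma']
  apply Finset.sum_nbij' (i := fun p => (⟨p.1 + p.2, p.1⟩ : Σ _ : ℕ, ℕ))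
    (j := fun p => (⟨p.2, p.1 - p.2⟩ : Σ _ : ℕ, ℕ))
  all_goals rintro ⟨x, y⟩ h
  all_goals simp only [Finset.mem_sigma, Finset.mem_range, Sigma.mk.inj_iff,
    Nat.add_sub_cancel_left, heq_eq_eq, and_true] at h ⊢
  all_goals omega

lemma key : ∀ b a N : ℕ,
    ∑ i ∈ range (N + 1), (i + a).choose a * (N - i + b).choose b
      = (N + a + b + 1).choose (a + b + 1) := by
  intro b
  induction b with
  | zero =>
    intro a N
    simpa using Nat.sum_range_add_choose N a
  | succ b ih =>
    intro a N
    have h1 : ∀ i ∈ range (N + 1),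
        (i + a).choose a * (N - i + (b + 1)).choose (b + 1)
          = ∑ t ∈ range (N - i + 1), (i + a).choose a * (t + b).choose b := by
      intro i _
      rw [← Finset.mul_sum, Nat.sum_range_add_choose (N - i) b]
      congr 2
    rw [Finset.sum_congr rfl h1, tri_swap N (fun i t => (i + a).choose a * (t + b).choose b)]
    have h2 : ∀ s ∈ range (N + 1),
        (∑ i ∈ range (s + 1), (i + a).choose a * (s - i + b).choose b)
          = (s + (a + b + 1)).choose (a + b + 1) := by
      intro s _
      rw [ih a s]
      congr 1
      omega
    rw [Finset.sum_congr rfl h2, Nat.sum_range_add_choose N (a + b + 1)]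
    congr 1
    omega

lemma key2 (n k l : ℕ) (hkn : k ≤ n) :
    ∑ j ∈ range (n - k + 1), (j + k).choose (k + l) * (n - j).choose k
      = (n + k + 1).choose (2 * k + l + 1) := by
  set N := n - k with hN
  rcases le_or_gt l N with hl | hl
  · have hsplit : N + 1 = l + (N - l + 1) := by omega
    rw [hsplit, Finset.sum_range_add]
    have h0 : ∀ j ∈ range l, (j + k).choose (k + l) * (n - j).choose k = 0 := by
      intro j hj
      rw [Finset.mem_range] at hj
      rw [Nat.choose_eq_zero_of_lt (by omega), Nat.zero_mul]
    rw [Finset.sum_congr rfl h0, Finset.sum_const_zero, Nat.zero_add]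
    have h1 : ∀ i ∈ range (N - l + 1),
        (l + i + k).choose (k + l) * (n - (l + i)).choose k
          = (i + (k + l)).choose (k + l) * ((N - l) - i + k).choose k := by
      intro i hi
      rw [Finset.mem_range] at hi
      congr 2 <;> omega
    rw [Finset.sum_congr rfl h1, key k (k + l) (N - l)]
    congr 1 <;> omega
  · have h0 : ∀ j ∈ range (N + 1), (j + k).choose (k + l) * (n - j).choose k = 0 := by
      intro j hj
      rw [Finset.mem_range] at hj
      rw [Nat.choose_eq_zero_of_lt (by omega), Nat.zero_mul]
    rw [Finset.sum_congr rfl h0, Finset.sum_const_zero,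
      Nat.choose_eq_zero_of_lt (by omega)]

lemma stirling2_eq_zero : ∀ m l : ℕ, m < l → stirling2 m l = 0 := by
  intro m
  induction m with
  | zero => intro l hl; match l, hl with | l + 1, _ => rfl
  | succ m ih =>
    intro l hl
    match l, hl with
    | l + 1, hl =>
      show (l + 1) * stirling2 m (l + 1) + stirling2 m l = 0
      rw [ih (l + 1) (by omega), ih l (by omega)]
      simp

lemma jchoose (j l : ℕ) :
    j.choose l * j = (l + 1) * j.choose (l + 1) + l * j.choose l := by
  rcases le_or_gt l j with h | h
  · have h1 := Nat.choose_succ_right_eq j l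
    calc j.choose l * j = j.choose l * (j - l) + l * j.choose l := by
          rw [mul_comm l (j.choose l), ← Nat.mul_add]; congr 1; omega
      _ = (l + 1) * j.choose (l + 1) + l * j.choose l := by
          rw [← h1]; ring_nf
  · rw [Nat.choose_eq_zero_of_lt h, Nat.choose_eq_zero_of_lt (by omega)]
    simp

lemma pow_eq (j m : ℕ) :
    j ^ m = ∑ l ∈ range (m + 1), stirling2 m l * (l.factorial * j.choose l) := by
  induction m with
  | zero => simp [stirling2]
  | succ m ih =>
    rw [pow_succ, ih, Finset.sum_mul]
    have hterm : ∀ l ∈ range (m + 1),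
        stirling2 m l * (l.factorial * j.choose l) * j
          = stirling2 m l * ((l + 1).factorial * j.choose (l + 1))
            + l * stirling2 m l * (l.factorial * j.choose l) := by
      intro l _
      have h := jchoose j l
      calc stirling2 m l * (l.factorial * j.choose l) * j
          = stirling2 m l * (l.factorial * (j.choose l * j)) := by ring
        _ = stirling2 m l * (l.factorial *
              ((l + 1) * j.choose (l + 1) + l * j.choose l)) := by rw [h]
        _ = stirling2 m l * ((l + 1).factorial * j.choose (l + 1))
            + l * stirling2 m l * (l.factorial * j.choose l) := by
              rw [Nat.factorial_succ]; ring
    rw [Finset.sum_congr rfl hterm, Finset.sum_add_distrib]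
    have hB : ∑ l ∈ range (m + 1), l * stirling2 m l * (l.factorial * j.choose l)
        = ∑ l ∈ range (m + 1),
            (l + 1) * stirling2 m (l + 1) * ((l + 1).factorial * j.choose (l + 1)) := by
      rw [Finset.sum_range_succ', Finset.sum_range_succ]
      simp [stirling2_eq_zero m (m + 1) (by omega)]
    rw [hB, ← Finset.sum_add_distrib]
    conv_rhs => rw [Finset.sum_range_succ']
    have h0 : stirling2 (m + 1) 0 * (Nat.factorial 0 * j.choose 0) = 0 := by
      simp [stirling2]
    rw [h0, add_zero]
    apply Finset.sum_congr rfl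
    intro l _
    show stirling2 m l * ((l + 1).factorial * j.choose (l + 1))
        + (l + 1) * stirling2 m (l + 1) * ((l + 1).factorial * j.choose (l + 1))
      = stirling2 (m + 1) (l + 1) * ((l + 1).factorial * j.choose (l + 1))
    rw [show stirling2 (m + 1) (l + 1)
        = (l + 1) * stirling2 m (l + 1) + stirling2 m l by simp [stirling2]]
    ring

lemma prod_id (j k l : ℕ) :
    j.choose l * (j + k).choose k = (k + l).choose k * (j + k).choose (k + l) := by
  rcases le_or_gt l j with h | h
  · have e1 : (j + k).choose j * j.choose l
        = (j + k).choose l * (j + k - l).choose (j - l) :=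
      Nat.choose_mul h
    have e2 : (j + k).choose (k + l) * (k + l).choose l
        = (j + k).choose l * (j + k - l).choose ((k + l) - l) :=
      Nat.choose_mul (by omega)
    have e3 : (j + k - l).choose (j - l) = (j + k - l).choose k := by
      have := Nat.choose_symm (show k ≤ j + k - l by omega)
      rw [show j + k - l - k = j - l by omega] at this
      exact this
    have e4 : (j + k).choose j = (j + k).choose k := Nat.choose_symm_add
    have e5 : (k + l).choose l = (k + l).choose k := by
      rw [Nat.add_comm k l]
      exact Nat.choose_symm_add
    calc j.choose l * (j + k).choose k
        = (j + k).choose j * j.choose l := by rw [e4]; ring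
      _ = (j + k).choose l * (j + k - l).choose (j - l) := e1
      _ = (j + k).choose l * (j + k - l).choose ((k + l) - l) := by
          rw [e3, show (k + l) - l = k by omega]
      _ = (j + k).choose (k + l) * (k + l).choose l := e2.symm
      _ = (k + l).choose k * (j + k).choose (k + l) := by rw [e5]; ring
  · rw [Nat.choose_eq_zero_of_lt h,
      Nat.choose_eq_zero_of_lt (show j + k < k + l by omega)]
    simp

lemma main_nat (n k m : ℕ) (hkn : k ≤ n) :
    ∑ j ∈ range (n - k + 1), j ^ m * ((j + k).choose k * (n - j).choose k)
      = ∑ l ∈ range (m + 1),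
          stirling2 m l * l.factorial * (k + l).choose k
            * (n + k + 1).choose (2 * k + l + 1) := by
  have h1 : ∀ j ∈ range (n - k + 1),
      j ^ m * ((j + k).choose k * (n - j).choose k)
        = ∑ l ∈ range (m + 1),
            stirling2 m l * (l.factorial * j.choose l)
              * ((j + k).choose k * (n - j).choose k) := by
    intro j _
    rw [pow_eq j m, Finset.sum_mul]
  rw [Finset.sum_congr rfl h1, Finset.sum_comm]
  apply Finset.sum_congr rfl
  intro l _
  rw [← key2 n k l hkn, Finset.mul_sum]
  apply Finset.sum_congr rfl
  intro j _
  have h := prod_id j k l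
  calc stirling2 m l * (l.factorial * j.choose l)
        * ((j + k).choose k * (n - j).choose k)
      = stirling2 m l * l.factorial * (j.choose l * (j + k).choose k)
          * (n - j).choose k := by ring
    _ = stirling2 m l * l.factorial * ((k + l).choose k * (j + k).choose (k + l))
          * (n - j).choose k := by rw [h]
    _ = stirling2 m l * l.factorial * (k + l).choose k
          * ((j + k).choose (k + l) * (n - j).choose k) := by ring

theorem stmt17 (n k m : ℕ) (hkn : k ≤ n) :
    (∑ j ∈ Finset.range (n - k + 1),
        (j : ℝ) ^ m * ((j + k).choose k * (n - j).choose k : ℕ)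
          / ((n + k + 1).choose (2 * k + 1) : ℕ)) =
      ∑ l ∈ Finset.range (m + 1),
        (stirling2 m l : ℝ) * (l.factorial : ℝ) *
          ((k + l).choose k : ℕ) * ((n + k + 1).choose (2 * k + l + 1) : ℕ)
          / ((n + k + 1).choose (2 * k + 1) : ℕ) := by
  rw [← Finset.sum_div, ← Finset.sum_div]
  congr 1
  have h := main_nat n k m hkn
  push_cast
  exact_mod_cast congrArg (fun x : ℕ => (x : ℝ)) h
end

section
/- The Reimer polynomial R_n(y) = ∑_{j=0}^n C(n,j) y^j ∫_j^{j+1} |t(t-1)⋯(t-n-1)| dt satisfies R_n(1) = (n+2)!/12 for every n ≥ 1. -/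
open Finset intervalIntegral

lemma fd_one (k : ℕ) :
    fwdDiff (1:ℝ) (fun t : ℝ => ∏ i ∈ Finset.range (k+1), (t - i)) =
      fun t : ℝ => ((k:ℝ)+1) * ∏ i ∈ Finset.range k, (t - i) := by
  funext t
  have h1 : ∏ i ∈ Finset.range (k+1), (t + 1 - i) =
      (t + 1) * ∏ i ∈ Finset.range k, (t - i) := by
    rw [Finset.prod_range_succ']
    have : (fun i : ℕ => t + 1 - ((i:ℕ)+1 : ℕ)) = fun i : ℕ => t - i := by
      funext i; push_cast; ring
    rw [this]
    push_cast
    ring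
  have h2 : ∏ i ∈ Finset.range (k+1), (t - i) =
      (∏ i ∈ Finset.range k, (t - i)) * (t - k) := Finset.prod_range_succ _ _
  simp only [fwdDiff, h1, h2]
  ring

lemma fd_iter (m k : ℕ) :
    (fwdDiff (1:ℝ))^[m] (fun t : ℝ => ∏ i ∈ Finset.range (k+m), (t - i)) =
      fun t : ℝ => ((k+m).descFactorial m : ℝ) * ∏ i ∈ Finset.range k, (t - i) := by
  induction m with
  | zero => simp
  | succ m ih =>
    have e : k + (m+1) = (k+m) + 1 := by ring
    rw [e, Function.iterate_succ_apply, fd_one (k+m)]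
    have e2 : (fun t : ℝ => ((k:ℝ)+(m:ℝ)+1) * ∏ i ∈ Finset.range (k+m), (t - i)) =
        (((k:ℝ)+(m:ℝ)+1) • fun t : ℝ => ∏ i ∈ Finset.range (k+m), (t - i)) := by
      funext t; simp [mul_comm]
    push_cast at e2 ⊢
    rw [e2, fwdDiff_iter_const_smul, ih]
    funext t
    rw [Nat.succ_descFactorial_succ]
    push_cast
    simp only [Pi.smul_apply, smul_eq_mul]
    ring

lemma desc2 (n : ℕ) : (n+2).descFactorial n * 2 = (n+2).factorial := by
  induction n with
  | zero => rfl
  | succ n ih =>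
    rw [show n+1+2 = n+3 from rfl, Nat.succ_descFactorial_succ (n+2) n, mul_assoc, ih]
    rfl

theorem stmt18 (n : ℕ) (hn : 1 ≤ n) :
    (∑ j ∈ Finset.range (n + 1),
        (n.choose j : ℝ) *
          ∫ t in (j : ℝ)..((j : ℝ) + 1), |∏ i ∈ Finset.range (n + 2), (t - i)|) =
      ((n + 2).factorial : ℝ) / 12 := by
  set P : ℝ → ℝ := fun t => ∏ i ∈ Finset.range (n + 2), (t - i) with hPdef
  have hPc : Continuous P := by
    apply continuous_finset_prod
    intro i _
    exact continuous_id.sub continuous_const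
  set D : ℝ := ((n+2).descFactorial n : ℝ) with hDdef
  -- Step 1: rewrite each term as an integral over [0,1]
  have step1 : ∀ j ∈ Finset.range (n+1),
      (n.choose j : ℝ) * (∫ t in (j : ℝ)..((j : ℝ) + 1), |P t|) =
      ∫ u in (0:ℝ)..1, ((n.choose j : ℝ) * (-1)^(n+1-j)) * P (u + j) := by
    intro j hj
    have hjn : j ≤ n := Nat.lt_succ_iff.mp (Finset.mem_range.mp hj)
    have hA : (∫ t in (j : ℝ)..((j : ℝ) + 1), |P t|) =
        (-1:ℝ)^(n+1-j) * ∫ t in (j : ℝ)..((j : ℝ) + 1), P t := by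
      rw [← intervalIntegral.integral_const_mul]
      apply intervalIntegral.integral_congr
      intro t ht
      show |P t| = (-1:ℝ)^(n+1-j) * P t
      rw [Set.uIcc_of_le (by linarith : (j:ℝ) ≤ (j:ℝ)+1)] at ht
      obtain ⟨ht1, ht2⟩ := ht
      have hsplit : P t = (∏ i ∈ Finset.range (j+1), (t - i)) *
          ∏ i ∈ Finset.Ico (j+1) (n+2), (t - i) :=
        (Finset.prod_range_mul_prod_Ico _ (by omega)).symm
      have hIco : ∏ i ∈ Finset.Ico (j+1) (n+2), (t - i) =
          (-1:ℝ)^(n+1-j) * ∏ i ∈ Finset.Ico (j+1) (n+2), ((i:ℝ) - t) := by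
        calc ∏ i ∈ Finset.Ico (j+1) (n+2), (t - i)
            = ∏ i ∈ Finset.Ico (j+1) (n+2), ((-1) * ((i:ℝ) - t)) :=
              Finset.prod_congr rfl (fun i _ => by ring)
          _ = (-1:ℝ)^(n+1-j) * ∏ i ∈ Finset.Ico (j+1) (n+2), ((i:ℝ) - t) := by
              rw [Finset.prod_mul_distrib, Finset.prod_const, Nat.card_Ico]
              congr 2
              omega
      have hAnn : 0 ≤ ∏ i ∈ Finset.range (j+1), (t - i) := by
        apply Finset.prod_nonneg
        intro i hi
        have : (i:ℝ) ≤ j := by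
          have := Nat.lt_succ_iff.mp (Finset.mem_range.mp hi)
          exact_mod_cast this
        linarith
      have hBnn : 0 ≤ ∏ i ∈ Finset.Ico (j+1) (n+2), ((i:ℝ) - t) := by
        apply Finset.prod_nonneg
        intro i hi
        have : ((j:ℝ)+1) ≤ i := by
          have := (Finset.mem_Ico.mp hi).1
          exact_mod_cast this
        linarith
      have hsq : ((-1:ℝ)^(n+1-j)) * ((-1:ℝ)^(n+1-j)) = 1 := by
        rw [← pow_add]
        exact Even.neg_one_pow ⟨n+1-j, rfl⟩
      have hval : (-1:ℝ)^(n+1-j) * P t =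
          (∏ i ∈ Finset.range (j+1), (t - i)) *
            ∏ i ∈ Finset.Ico (j+1) (n+2), ((i:ℝ) - t) := by
        rw [hsplit, hIco, ← mul_assoc, mul_comm ((-1:ℝ)^(n+1-j)), mul_assoc, ← mul_assoc ((-1:ℝ)^(n+1-j)), hsq]
        ring
      have hnn : 0 ≤ (-1:ℝ)^(n+1-j) * P t := hval ▸ mul_nonneg hAnn hBnn
      have : |(-1:ℝ)^(n+1-j) * P t| = |P t| := by
        rw [abs_mul, abs_pow, abs_neg, abs_one, one_pow, one_mul]
      rw [← this, abs_of_nonneg hnn]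
    have hB : (∫ t in (j : ℝ)..((j : ℝ) + 1), P t) = ∫ u in (0:ℝ)..1, P (u + j) := by
      rw [intervalIntegral.integral_comp_add_right]
      norm_num [add_comm]
    rw [hA, hB, ← mul_assoc, ← intervalIntegral.integral_const_mul]
  rw [Finset.sum_congr rfl step1]
  have hint : ∀ j ∈ Finset.range (n+1), IntervalIntegrable
      (fun u : ℝ => ((n.choose j : ℝ) * (-1)^(n+1-j)) * P (u + j)) MeasureTheory.volume 0 1 :=
    fun j _ => ((continuous_const.mul (hPc.comp (continuous_id.add continuous_const)))).intervalIntegrable _ _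
  rw [← intervalIntegral.integral_finset_sum hint]
  have key : ∀ u : ℝ, (∑ j ∈ Finset.range (n+1),
      ((n.choose j : ℝ) * (-1)^(n+1-j)) * P (u + j)) = -(D * (u * (u - 1))) := by
    intro u
    have h := fwdDiff_iter_eq_sum_shift (1:ℝ) P n u
    have h2 : (fwdDiff (1:ℝ))^[n] P u = D * (u * (u - 1)) := by
      have e : P = fun t : ℝ => ∏ i ∈ Finset.range (2+n), (t - i) := by
        rw [hPdef, Nat.add_comm 2 n]
      rw [e, fd_iter n 2]
      have : ∏ i ∈ Finset.range 2, (u - (i:ℕ)) = u * (u - 1) := by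
        simp [Finset.prod_range_succ]
      show ((2+n).descFactorial n : ℝ) * ∏ i ∈ Finset.range 2, (u - (i:ℕ)) = D * (u*(u-1))
      rw [show 2+n = n+2 from by omega, this, hDdef]
    have h3 : (∑ j ∈ Finset.range (n+1),
        ((n.choose j : ℝ) * (-1)^(n+1-j)) * P (u + j)) =
        -∑ k ∈ Finset.range (n+1), ((-1 : ℤ) ^ (n - k) * n.choose k) • P (u + k • (1:ℝ)) := by
      rw [← Finset.sum_neg_distrib]
      apply Finset.sum_congr rfl
      intro j hj
      have hjn : j ≤ n := Nat.lt_succ_iff.mp (Finset.mem_range.mp hj)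
      have he : n + 1 - j = (n - j) + 1 := by omega
      rw [he, zsmul_eq_mul]
      push_cast
      rw [nsmul_eq_mul, pow_succ]
      ring
    rw [h3, ← h, h2]
  have : (∫ u in (0:ℝ)..1, ∑ j ∈ Finset.range (n+1),
      ((n.choose j : ℝ) * (-1)^(n+1-j)) * P (u + j)) = ∫ u in (0:ℝ)..1, -(D * (u * (u - 1))) := by
    apply intervalIntegral.integral_congr
    intro u _
    exact key u
  rw [this, intervalIntegral.integral_neg, intervalIntegral.integral_const_mul]
  have hI : (∫ u in (0:ℝ)..1, u * (u - 1)) = -(1/6 : ℝ) := by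
    have e : (fun u : ℝ => u * (u - 1)) = fun u : ℝ => u^2 - u^1 := funext fun u => by ring
    rw [e, intervalIntegral.integral_sub ((continuous_pow 2).intervalIntegrable _ _)
      ((continuous_pow 1).intervalIntegrable _ _), integral_pow, integral_pow]
    norm_num
  rw [hI]
  have hD : D * 2 = ((n+2).factorial : ℝ) := by
    rw [hDdef]
    exact_mod_cast congrArg (Nat.cast : ℕ → ℝ) (desc2 n)
  linarith
end
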